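/- Let e(x,y) = √(2/h(x))·sin(π(y - f₁(x))/h(x)) with h = f₂ - f₁. If h is C¹ with |h'(x)| ≤ δ and h(x) ≥ 1/2, and f₁ is C¹ with |f₁'(x)| ≤ δ, then |∂_x e(x,y)| ≤ C·δ for all y ∈ [f₁(x), f₂(x)], for an absolute constant C. -/

import Mathlib

open Real

/-- For `e(x,y) = √(2/h(x)) sin(π(y - f₁(x))/h(x))` with `h = f₂ - f₁`,
if `|h'(x)| ≤ δ`, `|f₁'(x)| ≤ δ`, `1/2 ≤ h(x) ≤ 1`, then `|∂_x e(x,y)| ≤ C δ` for all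
`y ∈ [f₁(x), f₂(x)]`, for an absolute constant `C`. -/
theorem stmt_15 : ∃ C : ℝ, 0 < C ∧
    ∀ (f₁ f₂ : ℝ → ℝ) (x δ : ℝ),
      0 < δ →
      DifferentiableAt ℝ f₁ x → DifferentiableAt ℝ f₂ x →
      |deriv (fun t => f₂ t - f₁ t) x| ≤ δ →
      |deriv f₁ x| ≤ δ →
      1 / 2 ≤ f₂ x - f₁ x → f₂ x - f₁ x ≤ 1 →
      ∀ y ∈ Set.Icc (f₁ x) (f₂ x),
        |deriv (fun t => Real.sqrt (2 / (f₂ t - f₁ t)) *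
          Real.sin (π * (y - f₁ t) / (f₂ t - f₁ t))) x| ≤ C * δ := by
  refine ⟨100, by norm_num, ?_⟩
  intro f₁ f₂ x δ hδ hf₁ hf₂ hh' hf₁' hlo hhi y hy
  set a := f₂ x - f₁ x with ha
  have ha0 : (0:ℝ) < a := by linarith
  have hane : a ≠ 0 := ne_of_gt ha0
  have H : HasDerivAt (fun t => f₂ t - f₁ t) (deriv f₂ x - deriv f₁ x) x :=
    hf₂.hasDerivAt.sub hf₁.hasDerivAt
  set b := deriv f₂ x - deriv f₁ x with hbdef
  have hb : |b| ≤ δ := by rwa [H.deriv] at hh'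
  set c := deriv f₁ x with hcdef
  -- derivative of u t = 2 / (f₂ t - f₁ t)
  have Hu : HasDerivAt (fun t => 2 / (f₂ t - f₁ t)) (-(2 * b) / a ^ 2) x := by
    have := (hasDerivAt_const x (2:ℝ)).div H hane
    refine this.congr_deriv ?_
    rw [ha]; ring
  have hua : (2:ℝ) / a ≠ 0 := by positivity
  have Hs : HasDerivAt (fun t => Real.sqrt (2 / (f₂ t - f₁ t)))
      ((-(2 * b) / a ^ 2) / (2 * Real.sqrt (2 / a))) x := Hu.sqrt hua
  -- derivative of v t = π * (y - f₁ t) / (f₂ t - f₁ t)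
  have Hn : HasDerivAt (fun t => π * (y - f₁ t)) (-(π * c)) x := by
    have := ((hasDerivAt_const x y).sub hf₁.hasDerivAt).const_mul π
    refine this.congr_deriv ?_
    rw [hcdef]; ring
  have Hv : HasDerivAt (fun t => π * (y - f₁ t) / (f₂ t - f₁ t))
      ((-(π * c) * a - π * (y - f₁ x) * b) / a ^ 2) x := Hn.div H hane
  have Hsin : HasDerivAt (fun t => Real.sin (π * (y - f₁ t) / (f₂ t - f₁ t)))
      (Real.cos (π * (y - f₁ x) / a) *
        ((-(π * c) * a - π * (y - f₁ x) * b) / a ^ 2)) x := Hv.sin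
  have HD := Hs.mul Hsin
  rw [show deriv (fun t => Real.sqrt (2 / (f₂ t - f₁ t)) * Real.sin (π * (y - f₁ t) / (f₂ t - f₁ t))) x = _ from HD.deriv]
  -- now bound the explicit expression
  have hc : |c| ≤ δ := hf₁'
  have hsa_lo : (1:ℝ) ≤ Real.sqrt (2 / a) := by
    rw [show (1:ℝ) = Real.sqrt 1 by simp]
    apply Real.sqrt_le_sqrt
    rw [le_div_iff₀ ha0]; linarith
  have hsa_hi : Real.sqrt (2 / a) ≤ 2 := by
    have h4 : 2 / a ≤ 4 := by rw [div_le_iff₀ ha0]; linarith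
    calc Real.sqrt (2 / a) ≤ Real.sqrt 4 := Real.sqrt_le_sqrt h4
      _ = 2 := by rw [show (4:ℝ) = 2^2 by norm_num, Real.sqrt_sq (by norm_num : (0:ℝ) ≤ 2)]
  have hy1 : 0 ≤ y - f₁ x := by linarith [hy.1]
  have hy2 : y - f₁ x ≤ a := by have := hy.2; simp only [ha]; linarith
  have ha2 : (1:ℝ)/4 ≤ a ^ 2 := by nlinarith
  -- bound first summand
  have h1 : |(-(2 * b) / a ^ 2) / (2 * Real.sqrt (2 / a)) *
      Real.sin (π * (y - f₁ x) / a)| ≤ 4 * δ := by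
    rw [abs_mul, abs_div, abs_div]
    have hs1 : |Real.sin (π * (y - f₁ x) / a)| ≤ 1 := Real.abs_sin_le_one _
    have hnum : |-(2 * b)| ≤ 2 * δ := by rw [abs_neg, abs_mul]; simp; linarith [hb]
    have hden : |a ^ 2| = a ^ 2 := abs_of_pos (by positivity)
    have hden2 : |2 * Real.sqrt (2 / a)| = 2 * Real.sqrt (2 / a) := by
      apply abs_of_pos; positivity
    rw [hden, hden2]
    have e1' : |-(2 * b)| / a ^ 2 ≤ 8 * δ := by
      calc |-(2 * b)| / a ^ 2 ≤ (2*δ) / (1/4) :=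
            div_le_div₀ (by positivity) hnum (by norm_num) ha2
        _ = 8 * δ := by ring
    have e2 : |-(2 * b)| / a ^ 2 / (2 * Real.sqrt (2 / a)) ≤ 8 * δ / 2 := by
      apply div_le_div₀ (by positivity) e1' (by norm_num) (by linarith)
    calc |-(2 * b)| / a ^ 2 / (2 * Real.sqrt (2 / a)) * |Real.sin (π * (y - f₁ x) / a)|
        ≤ (8 * δ / 2) * 1 := by
          apply mul_le_mul e2 hs1 (abs_nonneg _) (by positivity)
      _ ≤ 4 * δ := by linarith
  -- bound second summand
  have h2 : |Real.sqrt (2 / a) * (Real.cos (π * (y - f₁ x) / a) *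
      ((-(π * c) * a - π * (y - f₁ x) * b) / a ^ 2))| ≤ 16 * π * δ := by
    rw [abs_mul, abs_mul, abs_div]
    have hcos : |Real.cos (π * (y - f₁ x) / a)| ≤ 1 := Real.abs_cos_le_one _
    have hnum : |-(π * c) * a - π * (y - f₁ x) * b| ≤ 2 * π * δ := by
      calc |-(π * c) * a - π * (y - f₁ x) * b|
          ≤ |-(π * c) * a| + |π * (y - f₁ x) * b| := abs_sub _ _
        _ ≤ π * δ * 1 + π * 1 * δ := by
            rw [abs_mul, abs_mul, abs_mul, abs_neg, abs_mul]
            have hπ : |π| = π := abs_of_pos Real.pi_pos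
            rw [hπ]
            have h3 : |a| ≤ 1 := by rw [abs_of_pos ha0]; exact hhi
            have h4 : |y - f₁ x| ≤ 1 := by
              rw [abs_of_nonneg hy1]; linarith
            have t1 : π * |c| * |a| ≤ π * δ * 1 :=
              mul_le_mul (mul_le_mul le_rfl hc (abs_nonneg _) Real.pi_pos.le) h3
                (abs_nonneg _) (by positivity)
            have t2 : π * |y - f₁ x| * |b| ≤ π * 1 * δ :=
              mul_le_mul (mul_le_mul le_rfl h4 (abs_nonneg _) Real.pi_pos.le) hb
                (abs_nonneg _) (by positivity)
            linarith
        _ = 2 * π * δ := by ring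
    have hden : |a ^ 2| = a ^ 2 := abs_of_pos (by positivity)
    rw [hden, abs_of_nonneg (Real.sqrt_nonneg _)]
    have e1 : |-(π * c) * a - π * (y - f₁ x) * b| / a ^ 2 ≤ 8 * π * δ := by
      calc |-(π * c) * a - π * (y - f₁ x) * b| / a ^ 2 ≤ (2 * π * δ) / (1/4) :=
            div_le_div₀ (by positivity) hnum (by norm_num) ha2
        _ = 8 * π * δ := by ring
    calc Real.sqrt (2 / a) * (|Real.cos (π * (y - f₁ x) / a)| *
        (|-(π * c) * a - π * (y - f₁ x) * b| / a ^ 2))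
        ≤ 2 * (1 * (8 * π * δ)) := by
          apply mul_le_mul hsa_hi _ (by positivity) (by norm_num)
          exact mul_le_mul hcos e1 (by positivity) (by norm_num)
      _ = 16 * π * δ := by ring
  calc |(-(2 * b) / a ^ 2) / (2 * Real.sqrt (2 / a)) * Real.sin (π * (y - f₁ x) / a) +
      Real.sqrt (2 / a) * (Real.cos (π * (y - f₁ x) / a) *
        ((-(π * c) * a - π * (y - f₁ x) * b) / a ^ 2))| ≤ 4 * δ + 16 * π * δ := by
        exact (abs_add_le _ _).trans (add_le_add h1 h2)
    _ ≤ 100 * δ := by nlinarith [Real.pi_le_four]
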